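/- For fixed α ∈ (0,1] and L ≥ √2·3^{1/4}, the perimeter P₆(L) = 5L − √((2L² − 4√3)/3) − √((2L² − 4√3α)/3) satisfies P₆(L) ≥ P₃(L) = 7√((3L² + 4√3)/21) + 7√((3L² + 4√3α)/21) − 3L. -/
import Mathlib

lemma key_ineq (L c : ℝ) (hL : 0 ≤ L) (hc : 0 ≤ c) (hcL : c ≤ 2 * L ^ 2) :
    7 * Real.sqrt ((3 * L ^ 2 + c) / 21) + Real.sqrt ((2 * L ^ 2 - c) / 3) ≤ 4 * L := by
  set a := Real.sqrt ((3 * L ^ 2 + c) / 21) with ha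
  set b := Real.sqrt ((2 * L ^ 2 - c) / 3) with hb
  have ha0 : 0 ≤ a := Real.sqrt_nonneg _
  have hb0 : 0 ≤ b := Real.sqrt_nonneg _
  have ha2 : a ^ 2 = (3 * L ^ 2 + c) / 21 := by
    rw [ha, Real.sq_sqrt]; positivity
  have hb2 : b ^ 2 = (2 * L ^ 2 - c) / 3 := by
    rw [hb, Real.sq_sqrt]; linarith
  nlinarith [sq_nonneg (a - b), sq_nonneg (7 * a + b - 4 * L), sq_nonneg (7 * a + b),
    mul_nonneg (mul_nonneg ha0 hb0) hL, mul_nonneg ha0 hb0, sq_nonneg L]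

/-- For `α ∈ (0,1]` and `L ≥ √2·3^(1/4)`, the kissing-hexagon perimeter
`P₆(L)` is at least `P₃(L)`. -/
theorem P6_ge_P3 (α : ℝ) (hα0 : 0 < α) (hα1 : α ≤ 1) :
    ∀ L : ℝ, Real.sqrt 2 * (3 : ℝ) ^ ((1 : ℝ) / 4) ≤ L →
      7 * Real.sqrt ((3 * L ^ 2 + 4 * Real.sqrt 3) / 21) +
          7 * Real.sqrt ((3 * L ^ 2 + 4 * Real.sqrt 3 * α) / 21) - 3 * L ≤
        5 * L - Real.sqrt ((2 * L ^ 2 - 4 * Real.sqrt 3) / 3) -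
          Real.sqrt ((2 * L ^ 2 - 4 * Real.sqrt 3 * α) / 3) := by
  intro L hL
  have h3 : (0:ℝ) ≤ Real.sqrt 3 := Real.sqrt_nonneg 3
  have hL0 : 0 ≤ L := le_trans (by positivity) hL
  have hsq : 2 * Real.sqrt 3 ≤ L ^ 2 := by
    have h1 : (Real.sqrt 2 * (3 : ℝ) ^ ((1 : ℝ) / 4)) ^ 2 = 2 * Real.sqrt 3 := by
      rw [mul_pow, Real.sq_sqrt (by norm_num : (0:ℝ) ≤ 2),
        ← Real.rpow_natCast ((3:ℝ) ^ ((1:ℝ)/4)) 2,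
        ← Real.rpow_mul (by norm_num : (0:ℝ) ≤ 3)]
      norm_num
      rw [Real.sqrt_eq_rpow]
    calc 2 * Real.sqrt 3 = (Real.sqrt 2 * (3 : ℝ) ^ ((1 : ℝ) / 4)) ^ 2 := h1.symm
      _ ≤ L ^ 2 := by
        apply pow_le_pow_left₀ (by positivity) hL
  have k1 := key_ineq L (4 * Real.sqrt 3) hL0 (by positivity) (by linarith)
  have k2 := key_ineq L (4 * Real.sqrt 3 * α) hL0 (by positivity)
    (by nlinarith)
  linarith
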